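/- Let μ be a centred probability measure on ℝ with no atoms and let F : ℝ × ℝ → ℝ be continuous and strictly supermodular such that for every w the function s ↦ F(w,s) is strictly increasing on all of ℝ. Assume the function w ↦ F(w, β_μ(w)) is μ-integrable. Then for every Rogers-admissible probability measure π with marginal μ such that F is π-integrable, one has ∫ F dπ ≤ ∫ F(w, β_μ(w)) dμ(w); i.e. the Azéma–Yor joint law, the pushforward of μ under w ↦ (w, β_μ(w)), maximizes ∫ F dπ among Rogers-admissible measures with marginal μ. -/

import Mathlib

open MeasureTheory Set

noncomputable section

/-- The set `M = {(x,y) : y ≥ 0 and y ≥ x}`. -/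
def MSet : Set (ℝ × ℝ) := {p : ℝ × ℝ | 0 ≤ p.2 ∧ p.1 ≤ p.2}

/-- A probability measure on `ℝ` is centred if the identity is integrable with mean `0`. -/
def Centred (μ : Measure ℝ) : Prop :=
  Integrable (fun x : ℝ => x) μ ∧ (∫ x, x ∂μ) = 0

/-- Strict supermodularity of a bivariate function. -/
def StrictlySupermodular (F : ℝ × ℝ → ℝ) : Prop :=
  ∀ w₁ w₂ s₁ s₂ : ℝ, w₁ < w₂ → s₁ < s₂ →
    F (w₁, s₂) + F (w₂, s₁) < F (w₁, s₁) + F (w₂, s₂)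

/-- `F` is serrated with ridge `a : ℝ → EReal`: for every `w`, `s ↦ F (w, s)` is
strictly increasing on `{s | s < a w}` and strictly decreasing on `{s | a w < s}`. -/
def SerratedWithRidge (F : ℝ × ℝ → ℝ) (a : ℝ → EReal) : Prop :=
  ∀ w : ℝ,
    StrictMonoOn (fun s : ℝ => F (w, s)) {s : ℝ | (s : EReal) < a w} ∧
    StrictAntiOn (fun s : ℝ => F (w, s)) {s : ℝ | a w < (s : EReal)}

/-- Rogers' conditions for `π` to be the joint law of the terminal value and the
running maximum of a UI martingale started at `0` with terminal law `μ`. -/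
def RogersAdmissible (μ : Measure ℝ) (π : Measure (ℝ × ℝ)) : Prop :=
  Integrable (fun p : ℝ × ℝ => p.1) π ∧
  (∫ p : ℝ × ℝ, p.1 ∂π) = 0 ∧
  π MSetᶜ = 0 ∧
  (∀ s : ℝ, 0 ≤ s →
    s * (π {p : ℝ × ℝ | s ≤ p.2}).toReal ≤ ∫ p in {p : ℝ × ℝ | s ≤ p.2}, p.1 ∂π) ∧
  Measure.map Prod.fst π = μ

/-- The barycenter function of `μ`. -/
def barycenter (μ : Measure ℝ) (w : ℝ) : ℝ :=
  if 0 < (μ (Ici w)).toReal then (∫ x in Ici w, x ∂μ) / (μ (Ici w)).toReal else w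

/-- `g(w) = min(β_μ(w), max(a(w), 0, w))`, the max computed in `EReal`. -/
def ridgeG (μ : Measure ℝ) (a : ℝ → EReal) (w : ℝ) : ℝ :=
  (min ((barycenter μ w : ℝ) : EReal) (max (a w) (max (0 : EReal) ((w : ℝ) : EReal)))).toReal


section Chains



inductive ChainVal (F : ℝ × ℝ → ℝ) (β : ℝ → ℝ) : ℝ → ℝ → ℝ → Prop
  | refl (a : ℝ) : ChainVal F β a a 0
  | step {a b v : ℝ} (w c : ℝ) (h : ChainVal F β a b v) (hw : β w ≤ b) (hbc : b ≤ c) :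
      ChainVal F β a c (v + (F (w, c) - F (w, b)))

variable {F : ℝ × ℝ → ℝ} {β : ℝ → ℝ}

lemma incr_comp (hsm : StrictlySupermodular F) (hβm : Monotone β)
    {w w' b c : ℝ} (hw : β w ≤ b) (hbc : b ≤ c) (hw' : c ≤ β w') :
    F (w, c) - F (w, b) ≤ F (w', c) - F (w', b) := by
  rcases eq_or_lt_of_le hbc with rfl | hlt
  · simp
  · have hββ : β w < β w' := lt_of_le_of_lt hw (lt_of_lt_of_le hlt hw')
    have hww : w < w' := by
      by_contra hc
      push_neg at hc
      exact absurd (hβm hc) (not_le.2 hββ)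
    have := hsm w w' b c hww hlt
    linarith

lemma ChainVal.le {a b v : ℝ} (h : ChainVal F β a b v) : a ≤ b := by
  induction h with
  | refl => exact le_rfl
  | step w c h hw hbc ih => exact le_trans ih hbc

lemma ChainVal.nonneg (hinc : ∀ w : ℝ, StrictMono (fun s : ℝ => F (w, s)))
    {a b v : ℝ} (h : ChainVal F β a b v) : 0 ≤ v := by
  induction h with
  | refl => exact le_rfl
  | step w c h hw hbc ih =>
      have := (hinc w).monotone hbc
      linarith

lemma ChainVal.tail_bound (hsm : StrictlySupermodular F) (hβm : Monotone β)
    {a b v : ℝ} (h : ChainVal F β a b v) :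
    ∀ w' : ℝ, b ≤ β w' → v ≤ F (w', b) - F (w', a) := by
  induction h with
  | refl => intro w' _; simp
  | step w c h hw hbc ih =>
      intro w' hc
      have h1 := ih w' (le_trans hbc hc)
      have h2 := incr_comp hsm hβm hw hbc hc
      linarith

lemma ChainVal.split {a b v : ℝ} (h : ChainVal F β a b v) :
    ∀ u : ℝ, a ≤ u → u ≤ b →
      ∃ v₁ v₂, ChainVal F β a u v₁ ∧ ChainVal F β u b v₂ ∧ v = v₁ + v₂ := by
  induction h with
  | refl =>
      intro u h1 h2
      have : u = a := le_antisymm h2 h1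
      subst this
      exact ⟨0, 0, ChainVal.refl u, ChainVal.refl u, by ring⟩
  | step w c h hw hbc ih =>
      intro u hau huc
      rcases le_or_gt u _ with hub | hbu
      · rcases ih u hau hub with ⟨v₁, v₂, hc1, hc2, hv⟩
        exact ⟨v₁, v₂ + (F (w, c) - F (w, _)), hc1, hc2.step w c hw hbc, by rw [hv]; ring⟩
      · refine ⟨_ + (F (w, u) - F (w, _)), F (w, c) - F (w, u),
          h.step w u hw hbu.le, ?_, by ring⟩
        have h0 : ChainVal F β u u 0 := ChainVal.refl u
        have := h0.step w c (le_trans hw hbu.le) huc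
        simpa using this

def lamSet (F : ℝ × ℝ → ℝ) (β : ℝ → ℝ) (t : ℝ) : Set ℝ :=
  {v | ∃ a, 0 ≤ a ∧ ChainVal F β a (max t 0) v}

def lam (F : ℝ × ℝ → ℝ) (β : ℝ → ℝ) (t : ℝ) : ℝ := sSup (lamSet F β t)

lemma zero_mem_lamSet (t : ℝ) : (0:ℝ) ∈ lamSet F β t :=
  ⟨max t 0, le_max_right _ _, ChainVal.refl _⟩

lemma lamSet_bddAbove (hsm : StrictlySupermodular F)
    (hinc : ∀ w : ℝ, StrictMono (fun s : ℝ => F (w, s)))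
    (hβm : Monotone β) (hβge : ∀ w, w ≤ β w) (t : ℝ) :
    BddAbove (lamSet F β t) := by
  set m := max t 0 with hm
  refine ⟨F (m, m) - F (m, 0), ?_⟩
  rintro v ⟨a, ha, hchain⟩
  have h1 := hchain.tail_bound hsm hβm m (hβge m)
  have h2 : F (m, 0) ≤ F (m, a) := (hinc m).monotone ha
  linarith

lemma lam_nonneg (hsm : StrictlySupermodular F)
    (hinc : ∀ w : ℝ, StrictMono (fun s : ℝ => F (w, s)))
    (hβm : Monotone β) (hβge : ∀ w, w ≤ β w) (t : ℝ) : 0 ≤ lam F β t :=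
  le_csSup (lamSet_bddAbove hsm hinc hβm hβge t) (zero_mem_lamSet t)

lemma lam_mono (hsm : StrictlySupermodular F)
    (hinc : ∀ w : ℝ, StrictMono (fun s : ℝ => F (w, s)))
    (hβm : Monotone β) (hβge : ∀ w, w ≤ β w) : Monotone (lam F β) := by
  intro u t hut
  have hmax : max u 0 ≤ max t 0 := max_le_max hut le_rfl
  apply Real.sSup_le _ (lam_nonneg hsm hinc hβm hβge t)
  rintro v ⟨a, ha, hchain⟩
  cases hchain with
  | refl =>
      exact lam_nonneg hsm hinc hβm hβge t
  | step w c h hw hbc =>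
      -- here c = max u 0 (the index), v = v₀ + (F (w, max u 0) - F (w, b))
      have hstep := h.step w (max t 0) hw (le_trans hbc hmax)
      have hmem : _ ∈ lamSet F β t := ⟨a, ha, hstep⟩
      have hle := le_csSup (lamSet_bddAbove hsm hinc hβm hβge t) hmem
      have hFF : F (w, max u 0) ≤ F (w, max t 0) := (hinc w).monotone hmax
      refine le_trans ?_ hle
      linarith

lemma lam_eq_of_nonneg {t : ℝ} (ht : 0 ≤ t) :
    lam F β t = sSup {v | ∃ a, 0 ≤ a ∧ ChainVal F β a t v} := by
  rw [lam, lamSet, max_eq_left ht]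

lemma lam_add_le (hsm : StrictlySupermodular F)
    (hinc : ∀ w : ℝ, StrictMono (fun s : ℝ => F (w, s)))
    (hβm : Monotone β) (hβge : ∀ w, w ≤ β w)
    {w u t : ℝ} (hβw : β w ≤ u) (hu : 0 ≤ u) (hut : u ≤ t) :
    lam F β u + (F (w, t) - F (w, u)) ≤ lam F β t := by
  have ht : 0 ≤ t := le_trans hu hut
  have key : ∀ v ∈ lamSet F β u, v + (F (w, t) - F (w, u)) ≤ lam F β t := by
    rintro v ⟨a, ha, hchain⟩
    rw [max_eq_left hu] at hchain
    have hstep := hchain.step w t hβw hut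
    have hmem : _ ∈ lamSet F β t := ⟨a, ha, by rw [max_eq_left ht]; exact hstep⟩
    exact le_csSup (lamSet_bddAbove hsm hinc hβm hβge t) hmem
  have h0 := key 0 (zero_mem_lamSet u)
  rw [zero_add] at h0
  have : lam F β u ≤ lam F β t - (F (w, t) - F (w, u)) := by
    apply Real.sSup_le _ (by linarith)
    intro v hv
    have := key v hv
    linarith
  linarith

lemma lam_le_add (hsm : StrictlySupermodular F)
    (hinc : ∀ w : ℝ, StrictMono (fun s : ℝ => F (w, s)))
    (hβm : Monotone β) (hβge : ∀ w, w ≤ β w)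
    {w' u t : ℝ} (hu : 0 ≤ u) (hut : u ≤ t) (htw : t ≤ β w') :
    lam F β t ≤ lam F β u + (F (w', t) - F (w', u)) := by
  have ht : 0 ≤ t := le_trans hu hut
  have hFd : 0 ≤ F (w', t) - F (w', u) := by
    have := (hinc w').monotone hut
    linarith
  apply Real.sSup_le _ (by
    have := lam_nonneg hsm hinc hβm hβge (t := u); linarith)
  rintro v ⟨a, ha, hchain⟩
  rw [max_eq_left ht] at hchain
  rcases le_or_gt a u with hau | hua
  · rcases hchain.split u hau hut with ⟨v₁, v₂, hc1, hc2, hv⟩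
    have h1 : v₁ ≤ lam F β u :=
      le_csSup (lamSet_bddAbove hsm hinc hβm hβge u)
        ⟨a, ha, by rw [max_eq_left hu]; exact hc1⟩
    have h2 := hc2.tail_bound hsm hβm w' htw
    linarith
  · have h1 := hchain.tail_bound hsm hβm w' htw
    have h2 : F (w', u) ≤ F (w', a) := (hinc w').monotone hua.le
    have h3 := lam_nonneg hsm hinc hβm hβge (F := F) (β := β) u
    linarith

lemma lam_rightCont (hsm : StrictlySupermodular F)
    (hinc : ∀ w : ℝ, StrictMono (fun s : ℝ => F (w, s)))
    (hβm : Monotone β) (hβge : ∀ w, w ≤ β w) (hFc : Continuous F) (x : ℝ) :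
    ContinuousWithinAt (lam F β) (Ici x) x := by
  set w' : ℝ := |x| + 1 with hw'
  have hub : ∀ t' ∈ Icc x (x + 1),
      lam F β t' ≤ lam F β x + (F (w', max t' 0) - F (w', max x 0)) := by
    intro t' ht'
    have h1 : max t' 0 ≤ β w' := by
      refine le_trans (max_le ?_ ?_) (hβge w')
      · calc t' ≤ x + 1 := ht'.2
          _ ≤ |x| + 1 := by have := le_abs_self x; linarith
      · positivity
    have h2 : max x 0 ≤ max t' 0 := max_le_max ht'.1 le_rfl
    have key := lam_le_add hsm hinc hβm hβge (w' := w') (le_max_right x 0) h2 h1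
    have e1 : lam F β (max t' 0) = lam F β t' := by
      rw [lam, lam, lamSet, lamSet, max_eq_left (le_max_right t' 0)]
    have e2 : lam F β (max x 0) = lam F β x := by
      rw [lam, lam, lamSet, lamSet, max_eq_left (le_max_right x 0)]
    rw [e1, e2] at key
    exact key
  have hlb : ∀ t' ∈ Ici x, lam F β x ≤ lam F β t' := fun t' ht' =>
    lam_mono hsm hinc hβm hβge ht'
  rw [ContinuousWithinAt]
  have hIcc : Icc x (x+1) ∈ nhdsWithin x (Ici x) := by
    apply Icc_mem_nhdsGE_of_mem
    constructor
    · exact le_rfl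
    · linarith
  refine tendsto_of_tendsto_of_tendsto_of_le_of_le'
    (g := fun _ => lam F β x)
    (h := fun t' => lam F β x + (F (w', max t' 0) - F (w', max x 0)))
    tendsto_const_nhds ?_ ?_ ?_
  · -- upper tendsto
    have hc : Continuous fun t' : ℝ => lam F β x + (F (w', max t' 0) - F (w', max x 0)) := by
      continuity
    have := hc.tendsto x
    simp only [sub_self, add_zero] at this
    exact this.mono_left nhdsWithin_le_nhds
  · exact Filter.eventually_iff_exists_mem.2 ⟨Ici x, self_mem_nhdsWithin, hlb⟩
  · exact Filter.eventually_iff_exists_mem.2 ⟨Icc x (x+1), hIcc, hub⟩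

end Chains

section Bary
variable {μ : Measure ℝ} [IsProbabilityMeasure μ]

variable {μ : Measure ℝ} [IsProbabilityMeasure μ]

lemma meas_Ici_ne_top (w : ℝ) : μ (Ici w) ≠ ⊤ := measure_ne_top μ _

lemma setInt_ge (hμ : Integrable (fun x : ℝ => x) μ) (w : ℝ) :
    w * (μ (Ici w)).toReal ≤ ∫ x in Ici w, x ∂μ := by
  have h1 : ∫ _ in Ici w, w ∂μ ≤ ∫ x in Ici w, x ∂μ := by
    apply setIntegral_mono_on (integrableOn_const)
      hμ.integrableOn measurableSet_Ici
    intro x hx; exact hx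
  simpa [setIntegral_const, smul_eq_mul, mul_comm, measureReal_def] using h1

lemma setInt_le (hμ : Integrable (fun x : ℝ => x) μ) {w c : ℝ}
    (hc : μ (Ici c) = 0) (hwc : w ≤ c) :
    ∫ x in Ici w, x ∂μ ≤ c * (μ (Ici w)).toReal := by
  have h1 : ∫ x in Ici w, x ∂μ ≤ ∫ _ in Ici w, c ∂μ := by
    apply setIntegral_mono_ae_restrict hμ.integrableOn
      (integrableOn_const)
    have h2 : {x : ℝ | ¬ x ≤ c} ⊆ Ici c := fun x hx => le_of_lt (not_le.1 hx)
    refine (ae_restrict_iff' measurableSet_Ici).2 ?_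
    have : ∀ᵐ x ∂μ, x ≤ c := by
      rw [ae_iff]; exact measure_mono_null (by intro x hx; exact h2 hx) hc
    filter_upwards [this] with x hx _; exact hx
  simpa [setIntegral_const, smul_eq_mul, mul_comm, measureReal_def] using h1

lemma bary_self (w : ℝ) (h : (μ (Ici w)).toReal = 0) : barycenter μ w = w := by
  simp [barycenter, h]

lemma bary_pos_def (w : ℝ) (h : 0 < (μ (Ici w)).toReal) :
    barycenter μ w = (∫ x in Ici w, x ∂μ) / (μ (Ici w)).toReal := by
  simp [barycenter, h]

lemma bary_ge_self (hμ : Integrable (fun x : ℝ => x) μ) (w : ℝ) : w ≤ barycenter μ w := by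
  rcases lt_or_ge 0 ((μ (Ici w)).toReal) with h | h
  · rw [bary_pos_def w h, le_div_iff₀ h]
    exact setInt_ge hμ w
  · rw [bary_self w (le_antisymm h ENNReal.toReal_nonneg)]

lemma int_Iio_le (hμ : Integrable (fun x : ℝ => x) μ) (w : ℝ) :
    ∫ x in Iio w, x ∂μ ≤ w * (μ (Iio w)).toReal := by
  have h1 : ∫ x in Iio w, x ∂μ ≤ ∫ _ in Iio w, w ∂μ := by
    apply setIntegral_mono_on hμ.integrableOn
      (integrableOn_const) measurableSet_Iio
    intro x hx; exact le_of_lt hx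
  simpa [setIntegral_const, smul_eq_mul, mul_comm, measureReal_def] using h1

lemma int_Ici_add_Iio (hμ : Integrable (fun x : ℝ => x) μ) (w : ℝ) :
    (∫ x in Ici w, x ∂μ) + (∫ x in Iio w, x ∂μ) = ∫ x, x ∂μ := by
  have h := integral_add_compl (measurableSet_Ici (a := w)) hμ
  rw [compl_Ici] at h
  exact h

lemma int_Ici_nonneg (hμ : Centred μ) (w : ℝ) : 0 ≤ ∫ x in Ici w, x ∂μ := by
  rcases le_or_gt w 0 with h | h
  · have h2 := int_Iio_le hμ.1 w
    have h3 := int_Ici_add_Iio hμ.1 w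
    rw [hμ.2] at h3
    nlinarith [ENNReal.toReal_nonneg (a := μ (Iio w))]
  · calc (0:ℝ) ≤ w * (μ (Ici w)).toReal := by positivity
    _ ≤ _ := setInt_ge hμ.1 w

lemma bary_nonneg (hμ : Centred μ) (w : ℝ) : 0 ≤ barycenter μ w := by
  rcases lt_or_ge 0 ((μ (Ici w)).toReal) with h | h
  · rw [bary_pos_def w h]
    exact div_nonneg (int_Ici_nonneg hμ w) h.le
  · have h0 : (μ (Ici w)).toReal = 0 := le_antisymm h ENNReal.toReal_nonneg
    rw [bary_self w h0]
    by_contra hw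
    push_neg at hw
    -- μ (Ici w) = 0, w < 0 : contradiction with centred
    have hIci : μ (Ici w) = 0 := by
      have := ENNReal.toReal_eq_zero_iff (μ (Ici w))
      rw [this] at h0
      rcases h0 with h0 | h0
      · exact h0
      · exact absurd h0 (meas_Ici_ne_top w)
    have h1 : ∫ x in Iio w, x ∂μ ≤ w * (μ (Iio w)).toReal := int_Iio_le hμ.1 w
    have h2 := int_Ici_add_Iio hμ.1 w
    rw [hμ.2] at h2
    have h3 : ∫ x in Ici w, x ∂μ = 0 := by
      rw [Measure.restrict_eq_zero.2 hIci]; simp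
    have h4 : (μ (Iio w)).toReal = 1 := by
      have : μ (Iio w) = 1 := by
        have := measure_add_measure_compl (μ := μ) (measurableSet_Iio (a := w))
        simp only [compl_Iio] at this
        rw [hIci] at this; simpa using this
      simp [this]
    rw [h4] at h1
    nlinarith

lemma bary_mono (hμ : Centred μ) : Monotone (barycenter μ) := by
  intro w₁ w₂ h12
  rcases eq_or_lt_of_le h12 with rfl | h12'
  · exact le_rfl
  rcases lt_or_ge 0 ((μ (Ici w₂)).toReal) with h2 | h2
  case inr =>
    -- μ (Ici w₂) = 0
    have h0 : (μ (Ici w₂)).toReal = 0 := le_antisymm h2 ENNReal.toReal_nonneg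
    have hIci : μ (Ici w₂) = 0 := by
      rcases (ENNReal.toReal_eq_zero_iff _).1 h0 with h | h
      · exact h
      · exact absurd h (meas_Ici_ne_top w₂)
    rw [bary_self w₂ h0]
    rcases lt_or_ge 0 ((μ (Ici w₁)).toReal) with h1 | h1
    · rw [bary_pos_def w₁ h1, div_le_iff₀ h1]
      exact setInt_le hμ.1 hIci h12
    · rw [bary_self w₁ (le_antisymm h1 ENNReal.toReal_nonneg)]; exact h12
  case inl =>
    have h1 : 0 < (μ (Ici w₁)).toReal := by
      apply lt_of_lt_of_le h2
      apply ENNReal.toReal_mono (meas_Ici_ne_top w₁)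
      exact measure_mono (Ici_subset_Ici.2 h12)
    rw [bary_pos_def w₁ h1, div_le_iff₀ h1]
    -- I(w₁) = ∫ over Ico w₁ w₂ + I(w₂)
    have hsplit : (∫ x in Ici w₁, x ∂μ)
        = (∫ x in Ico w₁ w₂, x ∂μ) + ∫ x in Ici w₂, x ∂μ := by
      rw [← setIntegral_union (by
        simp only [Set.disjoint_left]
        rintro x ⟨-, hx2⟩ hx3
        exact absurd hx3 (not_le.2 hx2)) measurableSet_Ici
        hμ.1.integrableOn hμ.1.integrableOn]
      congr 1
      rw [Ico_union_Ici_eq_Ici h12]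
    have hIcoInt : ∫ x in Ico w₁ w₂, x ∂μ ≤ w₂ * (μ (Ico w₁ w₂)).toReal := by
      have h1' : ∫ x in Ico w₁ w₂, x ∂μ ≤ ∫ _ in Ico w₁ w₂, w₂ ∂μ := by
        apply setIntegral_mono_on hμ.1.integrableOn
          (integrableOn_const) measurableSet_Ico
        intro x hx; exact hx.2.le
      simpa [setIntegral_const, smul_eq_mul, mul_comm, measureReal_def] using h1'
    have hIw2 : ∫ x in Ici w₂, x ∂μ = barycenter μ w₂ * (μ (Ici w₂)).toReal := by
      rw [bary_pos_def w₂ h2, div_mul_cancel₀]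
      exact ne_of_gt h2
    have hm : (μ (Ici w₁)).toReal = (μ (Ico w₁ w₂)).toReal + (μ (Ici w₂)).toReal := by
      rw [← ENNReal.toReal_add (measure_ne_top μ _) (measure_ne_top μ _)]
      congr 1
      rw [← measure_union (by
        simp only [Set.disjoint_left]
        rintro x ⟨-, hx2⟩ hx3
        exact absurd hx3 (not_le.2 hx2)) measurableSet_Ici]
      rw [Ico_union_Ici_eq_Ici h12]
    have hw2b : w₂ ≤ barycenter μ w₂ := bary_ge_self hμ.1 w₂
    have hIco_nonneg : 0 ≤ (μ (Ico w₁ w₂)).toReal := ENNReal.toReal_nonneg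
    calc (∫ x in Ici w₁, x ∂μ)
        = (∫ x in Ico w₁ w₂, x ∂μ) + ∫ x in Ici w₂, x ∂μ := hsplit
      _ ≤ w₂ * (μ (Ico w₁ w₂)).toReal + barycenter μ w₂ * (μ (Ici w₂)).toReal := by
          rw [hIw2]; linarith
      _ ≤ barycenter μ w₂ * (μ (Ico w₁ w₂)).toReal + barycenter μ w₂ * (μ (Ici w₂)).toReal := by
          nlinarith
      _ = barycenter μ w₂ * (μ (Ici w₁)).toReal := by rw [hm]; ring

lemma bary_int_eq (hμ : Centred μ) (c : ℝ) :
    ∫ x in Ici c, (x - c) ∂μ = (μ (Ici c)).toReal * (barycenter μ c - c) := by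
  have hsub : ∫ x in Ici c, (x - c) ∂μ
      = (∫ x in Ici c, x ∂μ) - c * (μ (Ici c)).toReal := by
    rw [integral_sub hμ.1.integrableOn (integrableOn_const)]
    simp [setIntegral_const, smul_eq_mul, mul_comm, measureReal_def]
  rw [hsub]
  rcases lt_or_ge 0 ((μ (Ici c)).toReal) with h | h
  · rw [bary_pos_def c h]; field_simp
  · have h0 : (μ (Ici c)).toReal = 0 := le_antisymm h ENNReal.toReal_nonneg
    have hIci : μ (Ici c) = 0 := by
      rcases (ENNReal.toReal_eq_zero_iff _).1 h0 with h | h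
      · exact h
      · exact absurd h (meas_Ici_ne_top c)
    rw [h0, Measure.restrict_eq_zero.2 hIci]
    simp

end Bary

section HLsec
variable {μ : Measure ℝ} [IsProbabilityMeasure μ]
variable {π : Measure (ℝ × ℝ)} [IsProbabilityMeasure π]
section HL

variable (hμc : Centred μ)
  (hπ1 : Integrable (fun p : ℝ × ℝ => p.1) π)
  (hπ4 : ∀ s : ℝ, 0 ≤ s →
    s * (π {p : ℝ × ℝ | s ≤ p.2}).toReal ≤ ∫ p in {p : ℝ × ℝ | s ≤ p.2}, p.1 ∂π)
  (hmap : Measure.map Prod.fst π = μ)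

include hμc hπ1 hπ4 hmap in
lemma HL_single {c t : ℝ} (ht : 0 < t) (hβc : barycenter μ c < t) :
    π {p : ℝ × ℝ | t ≤ p.2} ≤ μ (Ici c) := by
  set A : Set (ℝ × ℝ) := {p : ℝ × ℝ | t ≤ p.2} with hA
  have hAmeas : MeasurableSet A := measurable_snd measurableSet_Ici
  have h4 := hπ4 t ht.le
  have hcc : c ≤ barycenter μ c := bary_ge_self hμc.1 c
  -- ∫ p in A, p.1 = ∫ p in A, (p.1 - c) + c * π A
  have hIsub : Integrable (fun p : ℝ × ℝ => p.1 - c) π := hπ1.sub (integrable_const c)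
  have hsplit : ∫ p in A, p.1 ∂π
      = (∫ p in A, (p.1 - c) ∂π) + c * (π A).toReal := by
    rw [integral_sub hπ1.integrableOn (integrableOn_const)]
    simp [setIntegral_const, smul_eq_mul, mul_comm, measureReal_def]
  have hImax : Integrable (fun p : ℝ × ℝ => max (p.1 - c) 0) π := hIsub.pos_part
  have hb1 : ∫ p in A, (p.1 - c) ∂π ≤ ∫ p in A, max (p.1 - c) 0 ∂π := by
    apply setIntegral_mono_on hIsub.integrableOn hImax.integrableOn hAmeas
    intro p _; exact le_max_left _ _
  have hb2 : ∫ p in A, max (p.1 - c) 0 ∂π ≤ ∫ p, max (p.1 - c) 0 ∂π := by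
    apply setIntegral_le_integral hImax
    filter_upwards with p; exact le_max_right _ _
  have hμmax : Integrable (fun x : ℝ => max (x - c) 0) μ := by
    exact (hμc.1.sub (integrable_const c)).pos_part
  have hb3 : ∫ p : ℝ × ℝ, max (p.1 - c) 0 ∂π = ∫ x, max (x - c) 0 ∂μ := by
    rw [← hmap, integral_map measurable_fst.aemeasurable]
    exact (Continuous.aestronglyMeasurable (by continuity))
  have hb4 : ∫ x, max (x - c) 0 ∂μ = ∫ x in Ici c, (x - c) ∂μ := by
    rw [← integral_add_compl (measurableSet_Ici (a := c)) hμmax, compl_Ici]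
    have e1 : ∫ x in Ici c, max (x - c) 0 ∂μ = ∫ x in Ici c, (x - c) ∂μ := by
      apply setIntegral_congr_fun measurableSet_Ici
      intro x hx; exact max_eq_left (by simp at hx ⊢; linarith)
    have e2 : ∫ x in Iio c, max (x - c) 0 ∂μ = 0 := by
      apply setIntegral_eq_zero_of_forall_eq_zero
      intro x hx; simp at hx ⊢; linarith
    rw [e1, e2, add_zero]
  have hbary := bary_int_eq hμc c
  -- combine
  have hmain : (t - c) * (π A).toReal
      ≤ (μ (Ici c)).toReal * (barycenter μ c - c) := by
    have := le_trans h4 (by rw [hsplit]; linarith : ∫ p in A, p.1 ∂π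
      ≤ (μ (Ici c)).toReal * (barycenter μ c - c) + c * (π A).toReal)
    linarith
  have hπA : (π A).toReal ≤ (μ (Ici c)).toReal := by
    nlinarith [ENNReal.toReal_nonneg (a := μ (Ici c)), ENNReal.toReal_nonneg (a := π A)]
  exact (ENNReal.toReal_le_toReal (measure_ne_top π A) (measure_ne_top μ _)).1 hπA

include hμc hπ1 hπ4 hmap in
lemma HL [NullSingletonClass μ] {t : ℝ} (ht : 0 < t) :
    π {p : ℝ × ℝ | t ≤ p.2} ≤ μ {w : ℝ | t ≤ barycenter μ w} := by
  set B : Set ℝ := {w : ℝ | t ≤ barycenter μ w} with hB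
  have hβm : Monotone (barycenter μ) := bary_mono hμc
  have hupper : ∀ a ∈ B, ∀ w, a ≤ w → w ∈ B := by
    intro a ha w haw
    exact le_trans ha (hβm haw)
  have htB : t ∈ B := by
    simp only [hB, mem_setOf_eq]
    exact bary_ge_self hμc.1 t
  by_cases hbdd : BddBelow B
  case neg =>
    have hBuniv : B = univ := by
      ext w
      simp only [mem_univ, iff_true]
      rcases not_bddBelow_iff.1 hbdd w with ⟨a, haB, haw⟩
      exact hupper a haB w haw.le
    rw [hBuniv]
    simpa using prob_le_one
  case pos =>
    set c : ℝ := sInf B with hc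
    have hBne : B.Nonempty := ⟨t, htB⟩
    have hstep : ∀ n : ℕ, π {p : ℝ × ℝ | t ≤ p.2} ≤ μ (Ici (c - 1/(n+1))) := by
      intro n
      apply HL_single hμc hπ1 hπ4 hmap ht
      have hlt : c - 1/(n+1) < c := by
        have : (0:ℝ) < 1/(n+1) := by positivity
        linarith
      have hnotB : c - 1/(n+1) ∉ B := fun hmem => absurd (csInf_le hbdd hmem) (not_le.2 hlt)
      simp only [hB, mem_setOf_eq, not_le] at hnotB
      exact hnotB
    have hiInter : ⋂ n : ℕ, Ici (c - 1/(n+1)) = Ici c := by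
      ext x
      simp only [mem_iInter, mem_Ici]
      constructor
      · intro h
        by_contra hx
        push_neg at hx
        rcases exists_nat_one_div_lt (show 0 < c - x by linarith) with ⟨n, hn⟩
        have := h n
        linarith
      · intro h n
        have : (0:ℝ) < 1/(n+1) := by positivity
        linarith
    have htend : Filter.Tendsto (fun n : ℕ => μ (Ici (c - 1/(n+1)))) Filter.atTop
        (nhds (μ (Ici c))) := by
      rw [← hiInter]
      apply tendsto_measure_iInter_atTop (fun n => (measurableSet_Ici).nullMeasurableSet)
      · intro m n hmn
        apply Ici_subset_Ici.2
        have : 1/((n:ℝ)+1) ≤ 1/((m:ℝ)+1) := by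
          apply one_div_le_one_div_of_le (by positivity)
          have : (m:ℝ) ≤ (n:ℝ) := Nat.cast_le.2 hmn
          linarith
        linarith
      · exact ⟨0, measure_ne_top μ _⟩
    have h1 : π {p : ℝ × ℝ | t ≤ p.2} ≤ μ (Ici c) := ge_of_tendsto' htend hstep
    have h2 : μ (Ici c) ≤ μ B := by
      have hsub : Ioi c ⊆ B := by
        intro x hx
        rcases (csInf_lt_iff hbdd hBne).1 hx with ⟨a, haB, hax⟩
        exact hupper a haB x hax.le
      calc μ (Ici c) = μ (Ioi c) := (measure_congr (Ioi_ae_eq_Ici (a := c))).symm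
        _ ≤ μ B := measure_mono hsub
    exact le_trans h1 h2

end HL

end HLsec

section Main

open Filter
open scoped ENNReal NNReal

theorem azemaYor_optimal (μ : Measure ℝ) [IsProbabilityMeasure μ] [NullSingletonClass μ]
    (hμ : Centred μ)
    (F : ℝ × ℝ → ℝ) (hFc : Continuous F) (hFsm : StrictlySupermodular F)
    (hinc : ∀ w : ℝ, StrictMono (fun s : ℝ => F (w, s)))
    (hint : Integrable (fun w : ℝ => F (w, barycenter μ w)) μ)
    (π : Measure (ℝ × ℝ)) [IsProbabilityMeasure π]
    (hπ : RogersAdmissible μ π) (hFπ : Integrable F π) :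
    (∫ p, F p ∂π) ≤ ∫ w, F (w, barycenter μ w) ∂μ := by
  obtain ⟨hπ1, hπ2, hπM, hπ4, hmap⟩ := hπ
  set β : ℝ → ℝ := barycenter μ with hβ
  have hβm : Monotone β := bary_mono hμ
  have hβge : ∀ w, w ≤ β w := bary_ge_self hμ.1
  have hβ0 : ∀ w, 0 ≤ β w := bary_nonneg hμ
  have hβmeas : Measurable β := hβm.measurable
  -- the Stieltjes function Λ
  set Λ : StieltjesFunction ℝ :=
    { toFun := lam F β
      mono' := lam_mono hFsm hinc hβm hβge
      right_continuous' := lam_rightCont hFsm hinc hβm hβge hFc } with hΛ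
  have hΛfun : ∀ x, Λ x = lam F β x := fun x => rfl
  set ν : Measure ℝ := Λ.measure with hν
  -- the Azéma–Yor integrand is integrable w.r.t. π
  have hAYmeas : Measurable (fun w : ℝ => F (w, β w)) :=
    hFc.measurable.comp (measurable_id.prodMk hβmeas)
  have hintπ : Integrable (fun p : ℝ × ℝ => F (p.1, β p.1)) π := by
    have h0 : Integrable (fun w : ℝ => F (w, β w)) (Measure.map Prod.fst π) := by
      rw [hmap]; exact hint
    exact (integrable_map_measure hAYmeas.aestronglyMeasurable
      measurable_fst.aemeasurable).1 h0
  set h : ℝ × ℝ → ℝ := fun p => F p - F (p.1, β p.1) with hh_def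
  have hh : Integrable h π := hFπ.sub hintπ
  set g : ℝ × ℝ → ℝ := fun p => lam F β p.2 - lam F β (β p.1) with hg_def
  have hMae : ∀ᵐ p ∂π, p ∈ MSet := by
    rw [ae_iff]
    simpa [Set.compl_def] using hπM
  -- pointwise inequality on MSet
  have hpt : ∀ p ∈ MSet, h p ≤ g p := by
    rintro ⟨w, s⟩ ⟨hs0, hws⟩
    simp only [hh_def, hg_def]
    rcases le_or_gt (β w) s with hcase | hcase
    · have := lam_add_le hFsm hinc hβm hβge (w := w) le_rfl (hβ0 w) hcase
      linarith
    · have := lam_le_add hFsm hinc hβm hβge (w' := w) hs0 hcase.le le_rfl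
      linarith
  -- lintegrals
  set A : ℝ≥0∞ := ∫⁻ p : ℝ × ℝ, ENNReal.ofReal (g p) ∂π with hA
  set B : ℝ≥0∞ := ∫⁻ p : ℝ × ℝ, ENNReal.ofReal (-g p) ∂π with hB
  have hSmeas : MeasurableSet {q : (ℝ × ℝ) × ℝ | β q.1.1 < q.2 ∧ q.2 ≤ q.1.2} := by
    apply MeasurableSet.inter
    · exact measurableSet_lt ((hβmeas.comp (measurable_fst.comp measurable_fst))) measurable_snd
    · exact measurableSet_le measurable_snd (measurable_snd.comp measurable_fst)
  have hSmeas' : MeasurableSet {q : (ℝ × ℝ) × ℝ | q.1.2 < q.2 ∧ q.2 ≤ β q.1.1} := by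
    apply MeasurableSet.inter
    · exact measurableSet_lt (measurable_snd.comp measurable_fst) measurable_snd
    · exact measurableSet_le measurable_snd (hβmeas.comp (measurable_fst.comp measurable_fst))
  -- A as iterated integral and swap
  have hAeq : A = ∫⁻ t, π {p : ℝ × ℝ | β p.1 < t ∧ t ≤ p.2} ∂ν := by
    have e1 : A = ∫⁻ p : ℝ × ℝ, ∫⁻ t,
        ({q : (ℝ × ℝ) × ℝ | β q.1.1 < q.2 ∧ q.2 ≤ q.1.2}.indicator (fun _ => 1) (p, t)) ∂ν ∂π := by
      rw [hA]
      apply lintegral_congr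
      intro p
      have e2 : (fun t => ({q : (ℝ × ℝ) × ℝ | β q.1.1 < q.2 ∧ q.2 ≤ q.1.2}.indicator
          (fun _ => (1:ℝ≥0∞)) (p, t))) = (Set.Ioc (β p.1) p.2).indicator (fun _ => 1) := by
        funext t
        by_cases hmem : t ∈ Set.Ioc (β p.1) p.2
        · rw [Set.indicator_of_mem hmem, Set.indicator_of_mem]
          exact hmem
        · rw [Set.indicator_of_notMem hmem, Set.indicator_of_notMem]
          exact hmem
      rw [e2, lintegral_indicator measurableSet_Ioc, setLIntegral_one,
        hν, Λ.measure_Ioc]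
    have hum : Measurable (Function.uncurry fun (p : ℝ × ℝ) (t : ℝ) =>
        ({q : (ℝ × ℝ) × ℝ | β q.1.1 < q.2 ∧ q.2 ≤ q.1.2}.indicator (fun _ => (1:ℝ≥0∞)) (p, t))) :=
      measurable_one.indicator hSmeas
    rw [e1, lintegral_lintegral_swap hum.aemeasurable]
    apply lintegral_congr
    intro t
    have e3 : (fun p : ℝ × ℝ => ({q : (ℝ × ℝ) × ℝ | β q.1.1 < q.2 ∧ q.2 ≤ q.1.2}.indicator
        (fun _ => (1:ℝ≥0∞)) (p, t))) = {p : ℝ × ℝ | β p.1 < t ∧ t ≤ p.2}.indicator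
        (fun _ => 1) := by
      funext p
      by_cases hmem : p ∈ {p : ℝ × ℝ | β p.1 < t ∧ t ≤ p.2}
      · rw [Set.indicator_of_mem hmem, Set.indicator_of_mem]; exact hmem
      · rw [Set.indicator_of_notMem hmem, Set.indicator_of_notMem]; exact hmem
    have hsec : MeasurableSet {p : ℝ × ℝ | β p.1 < t ∧ t ≤ p.2} := by
      apply MeasurableSet.inter
      · exact measurableSet_lt (hβmeas.comp measurable_fst) measurable_const
      · exact measurableSet_le measurable_const measurable_snd
    rw [e3, lintegral_indicator hsec, setLIntegral_one]
  have hBeq : B = ∫⁻ t, π {p : ℝ × ℝ | p.2 < t ∧ t ≤ β p.1} ∂ν := by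
    have e1 : B = ∫⁻ p : ℝ × ℝ, ∫⁻ t,
        ({q : (ℝ × ℝ) × ℝ | q.1.2 < q.2 ∧ q.2 ≤ β q.1.1}.indicator (fun _ => 1) (p, t)) ∂ν ∂π := by
      rw [hB]
      apply lintegral_congr
      intro p
      have e2 : (fun t => ({q : (ℝ × ℝ) × ℝ | q.1.2 < q.2 ∧ q.2 ≤ β q.1.1}.indicator
          (fun _ => (1:ℝ≥0∞)) (p, t))) = (Set.Ioc p.2 (β p.1)).indicator (fun _ => 1) := by
        funext t
        by_cases hmem : t ∈ Set.Ioc p.2 (β p.1)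
        · rw [Set.indicator_of_mem hmem, Set.indicator_of_mem]; exact hmem
        · rw [Set.indicator_of_notMem hmem, Set.indicator_of_notMem]; exact hmem
      rw [e2, lintegral_indicator measurableSet_Ioc, setLIntegral_one,
        hν, Λ.measure_Ioc]
      congr 1
      show -(lam F β p.2 - lam F β (β p.1)) = lam F β (β p.1) - lam F β p.2
      ring
    have hum : Measurable (Function.uncurry fun (p : ℝ × ℝ) (t : ℝ) =>
        ({q : (ℝ × ℝ) × ℝ | q.1.2 < q.2 ∧ q.2 ≤ β q.1.1}.indicator (fun _ => (1:ℝ≥0∞)) (p, t))) :=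
      measurable_one.indicator hSmeas'
    rw [e1, lintegral_lintegral_swap hum.aemeasurable]
    apply lintegral_congr
    intro t
    have e3 : (fun p : ℝ × ℝ => ({q : (ℝ × ℝ) × ℝ | q.1.2 < q.2 ∧ q.2 ≤ β q.1.1}.indicator
        (fun _ => (1:ℝ≥0∞)) (p, t))) = {p : ℝ × ℝ | p.2 < t ∧ t ≤ β p.1}.indicator
        (fun _ => 1) := by
      funext p
      by_cases hmem : p ∈ {p : ℝ × ℝ | p.2 < t ∧ t ≤ β p.1}
      · rw [Set.indicator_of_mem hmem, Set.indicator_of_mem]; exact hmem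
      · rw [Set.indicator_of_notMem hmem, Set.indicator_of_notMem]; exact hmem
    have hsec : MeasurableSet {p : ℝ × ℝ | p.2 < t ∧ t ≤ β p.1} := by
      apply MeasurableSet.inter
      · exact measurableSet_lt measurable_snd measurable_const
      · exact measurableSet_le measurable_const (hβmeas.comp measurable_fst)
    rw [e3, lintegral_indicator hsec, setLIntegral_one]
  -- A ≤ B via Hardy-Littlewood
  have hAB : A ≤ B := by
    rw [hAeq, hBeq]
    apply lintegral_mono
    intro t
    show π {p : ℝ × ℝ | β p.1 < t ∧ t ≤ p.2} ≤ π {p : ℝ × ℝ | p.2 < t ∧ t ≤ β p.1}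
    rcases le_or_gt t 0 with ht | ht
    · have he : {p : ℝ × ℝ | β p.1 < t ∧ t ≤ p.2} = ∅ := by
        ext p
        simp only [Set.mem_setOf_eq, Set.mem_empty_iff_false, iff_false, not_and]
        intro hlt
        exact absurd (lt_of_le_of_lt (hβ0 p.1) hlt) (not_lt.2 ht)
      rw [he]
      simp
    · have hX : MeasurableSet {p : ℝ × ℝ | t ≤ p.2} :=
        measurableSet_le measurable_const measurable_snd
      have hY : MeasurableSet {p : ℝ × ℝ | t ≤ β p.1} :=
        measurableSet_le measurable_const (hβmeas.comp measurable_fst)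
      have hXY : π {p : ℝ × ℝ | t ≤ p.2} ≤ π {p : ℝ × ℝ | t ≤ β p.1} := by
        have hHL := HL hμ hπ1 hπ4 hmap ht
        have hmeaset : MeasurableSet {w : ℝ | t ≤ barycenter μ w} :=
          measurableSet_le measurable_const (bary_mono hμ).measurable
        have e := Measure.map_apply (μ := π) measurable_fst hmeaset
        rw [hmap] at e
        have hmY : μ {w : ℝ | t ≤ barycenter μ w} = π {p : ℝ × ℝ | t ≤ β p.1} := by
          rw [e]; rfl
        rw [hmY] at hHL
        exact hHL
      have hdiff1 : {p : ℝ × ℝ | β p.1 < t ∧ t ≤ p.2}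
          = {p : ℝ × ℝ | t ≤ p.2} \ {p : ℝ × ℝ | t ≤ β p.1} := by
        ext p
        simp only [Set.mem_setOf_eq, Set.mem_diff, not_le]
        tauto
      have hdiff2 : {p : ℝ × ℝ | p.2 < t ∧ t ≤ β p.1}
          = {p : ℝ × ℝ | t ≤ β p.1} \ {p : ℝ × ℝ | t ≤ p.2} := by
        ext p
        simp only [Set.mem_setOf_eq, Set.mem_diff, not_le]
        tauto
      rw [hdiff1, hdiff2]
      have e1 := measure_diff_add_inter (μ := π) {p : ℝ × ℝ | t ≤ p.2} hY
      have e2 := measure_diff_add_inter (μ := π) {p : ℝ × ℝ | t ≤ β p.1} hX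
      have e3 : {p : ℝ × ℝ | t ≤ p.2} ∩ {p : ℝ × ℝ | t ≤ β p.1}
          = {p : ℝ × ℝ | t ≤ β p.1} ∩ {p : ℝ × ℝ | t ≤ p.2} := Set.inter_comm _ _
      rw [← ENNReal.add_le_add_iff_right
        (measure_ne_top π ({p : ℝ × ℝ | t ≤ p.2} ∩ {p : ℝ × ℝ | t ≤ β p.1}))]
      rw [e1]
      calc π {p : ℝ × ℝ | t ≤ p.2} ≤ π {p : ℝ × ℝ | t ≤ β p.1} := hXY
        _ = _ := by rw [← e2, e3]
  -- B is finite
  have hBle : B ≤ ∫⁻ p, ENNReal.ofReal (-h p) ∂π := by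
    rw [hB]
    apply lintegral_mono_ae
    filter_upwards [hMae] with p hp
    exact ENNReal.ofReal_le_ofReal (by linarith [hpt p hp])
  have hnegfin : (∫⁻ p, ENNReal.ofReal (-h p) ∂π) ≠ ⊤ := by
    have hle : ∀ p, ENNReal.ofReal (-h p) ≤ (‖h p‖₊ : ℝ≥0∞) := by
      intro p
      rw [← enorm_eq_nnnorm, Real.enorm_eq_ofReal_abs]
      exact ENNReal.ofReal_le_ofReal (neg_le_abs _)
    exact ne_top_of_le_ne_top hh.2.ne (lintegral_mono hle)
  have hBfin : B ≠ ⊤ := ne_top_of_le_ne_top hnegfin hBle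
  -- ∫ h ≤ 0
  have hposle : (∫⁻ p, ENNReal.ofReal (h p) ∂π) ≤ A := by
    rw [hA]
    apply lintegral_mono_ae
    filter_upwards [hMae] with p hp
    exact ENNReal.ofReal_le_ofReal (hpt p hp)
  have hinth : (∫ p, h p ∂π) ≤ 0 := by
    rw [integral_eq_lintegral_pos_part_sub_lintegral_neg_part hh]
    have t1 : (∫⁻ p, ENNReal.ofReal (h p) ∂π).toReal ≤ B.toReal :=
      ENNReal.toReal_mono hBfin (le_trans hposle hAB)
    have t2 : B.toReal ≤ (∫⁻ p, ENNReal.ofReal (-h p) ∂π).toReal :=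
      ENNReal.toReal_mono hnegfin hBle
    linarith
  -- conclude
  have hid : ∫ p : ℝ × ℝ, F (p.1, β p.1) ∂π = ∫ w, F (w, β w) ∂μ := by
    have e := integral_map (μ := π) (φ := Prod.fst)
      measurable_fst.aemeasurable (f := fun w : ℝ => F (w, β w))
      hAYmeas.aestronglyMeasurable
    rw [hmap] at e
    exact e.symm
  have hsplit : ∫ p, F p ∂π = (∫ p, h p ∂π) + ∫ p : ℝ × ℝ, F (p.1, β p.1) ∂π := by
    rw [← integral_add hh hintπ]
    apply integral_congr_ae
    filter_upwards with p
    simp [hh_def]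
  have hgoal : ∫ w, F (w, β w) ∂μ = ∫ w, F (w, barycenter μ w) ∂μ := rfl
  rw [hsplit, hid]
  linarith

end Main
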